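/- For every w ∈ ℝ^n, the ℓ1-distance from w to the nonempty polyhedron P = {v ∈ ℝ^n : Av ≤ c} equals the optimal value of a dual linear program: inf_{v ∈ P} ‖w − v‖₁ = sup{⟨λ, Aw − c⟩ : λ ∈ ℝ^m, λ ≥ 0 componentwise, ‖Aᵀλ‖_∞ ≤ 1}. -/

import Mathlib

open Finset Topology
variable {E : Type*} [NormedAddCommGroup E] [InnerProductSpace ℝ E]

lemma cone_caratheodory {ι : Type*} [Fintype ι] [DecidableEq ι] (a : ι → E) :
    ∀ (k : ℕ) (x : ι → ℝ), (∀ i, 0 ≤ x i) → (univ.filter fun i => x i ≠ 0).card ≤ k →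
    ∃ x' : ι → ℝ, (∀ i, 0 ≤ x' i) ∧ ∑ i, x' i • a i = ∑ i, x i • a i ∧
      LinearIndependent ℝ (fun i : {i // x' i ≠ 0} => a i.1) := by
  intro k
  induction k with
  | zero =>
    intro x hx hcard
    have hempty : ∀ i, x i = 0 := by
      intro i
      by_contra hne
      have : i ∈ univ.filter fun i => x i ≠ 0 := by simp [hne]
      have := card_pos.2 ⟨i, this⟩
      omega
    refine ⟨x, hx, rfl, ?_⟩
    have : IsEmpty {i // x i ≠ 0} := ⟨fun i => i.2 (hempty i.1)⟩
    exact linearIndependent_empty_type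
  | succ k ih =>
    intro x hx hcard
    by_cases hli : LinearIndependent ℝ (fun i : {i // x i ≠ 0} => a i.1)
    · exact ⟨x, hx, rfl, hli⟩
    · -- get a nontrivial relation supported on the support of x, with a positive entry
      obtain ⟨d, hdsum, hdsupp, i₁, hd₁⟩ :
          ∃ d : ι → ℝ, ∑ i, d i • a i = 0 ∧ (∀ i, x i = 0 → d i = 0) ∧ ∃ i, 0 < d i := by
        obtain ⟨g, hg0, i₀, hgi₀⟩ := Fintype.not_linearIndependent_iff.1 hli
        set d0 : ι → ℝ := fun i => if h : x i ≠ 0 then g ⟨i, h⟩ else 0 with hd0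
        have hsum0 : ∑ i, d0 i • a i = 0 := by
          rw [← hg0]
          have h1 : ∑ i : ι, d0 i • a i = ∑ i ∈ univ.filter fun i => x i ≠ 0, d0 i • a i := by
            refine (Finset.sum_subset (Finset.filter_subset _ _) ?_).symm
            intro i _ hni
            simp only [mem_filter, mem_univ, true_and, not_not] at hni
            simp [hd0, hni]
          have h2 : ∑ i ∈ univ.filter (fun i => x i ≠ 0), d0 i • a i
              = ∑ i : {i // x i ≠ 0}, d0 i.1 • a i.1 :=
            Finset.sum_subtype _ (fun i => by simp) _
          rw [h1, h2]
          exact Finset.sum_congr rfl fun i _ => by simp [hd0, i.2]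
        have hsupp0 : ∀ i, x i = 0 → d0 i = 0 := fun i hi => by simp [hd0, hi]
        by_cases hpos : ∃ i, 0 < d0 i
        · exact ⟨d0, hsum0, hsupp0, hpos⟩
        · push_neg at hpos
          refine ⟨-d0, by simpa using hsum0, fun i hi => by simp [hsupp0 i hi], i₀.1, ?_⟩
          have : d0 i₀.1 ≠ 0 := by simp [hd0, i₀.2]; exact hgi₀
          have := hpos i₀.1
          simp only [Pi.neg_apply]
          cases lt_or_eq_of_le this with
          | inl h => linarith
          | inr h => exact absurd h ‹d0 i₀.1 ≠ 0›
      have hxi₁ : x i₁ ≠ 0 := fun h => by simp [hdsupp i₁ h] at hd₁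
      set T : Finset ι := univ.filter fun i => 0 < d i with hT
      have hTne : T.Nonempty := ⟨i₁, by simp [hT, hd₁]⟩
      obtain ⟨istar, histar, hmin⟩ := Finset.exists_min_image T (fun i => x i / d i) hTne
      have hdstar : 0 < d istar := by simpa [hT] using histar
      set t := x istar / d istar with ht
      have ht0 : 0 ≤ t := div_nonneg (hx _) hdstar.le
      have hxstar : x istar ≠ 0 := fun h => by
        rw [hdsupp istar h] at hdstar; exact lt_irrefl 0 hdstar
      set x' : ι → ℝ := fun i => x i - t * d i with hx'
      have hx'0 : ∀ i, 0 ≤ x' i := by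
        intro i
        rcases le_or_gt (d i) 0 with h | h
        · have h1 : t * d i ≤ 0 := mul_nonpos_iff.2 (Or.inl ⟨ht0, h⟩)
          have := hx i
          simp only [hx']; linarith
        · have h1 : t ≤ x i / d i := hmin i (by simp [hT, h])
          have h2 := (le_div_iff₀ h).1 h1
          simp only [hx']; linarith
      have hx'star : x' istar = 0 := by
        simp only [hx', ht]
        field_simp
        ring
      have hsupp' : (univ.filter fun i => x' i ≠ 0)
          ⊆ (univ.filter fun i => x i ≠ 0).erase istar := by
        intro i hi
        simp only [mem_filter, mem_univ, true_and] at hi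
        rw [mem_erase, mem_filter]
        refine ⟨?_, mem_univ i, ?_⟩
        · rintro rfl; exact hi hx'star
        · intro h
          exact hi (by simp [hx', hdsupp i h, h])
      have hcard' : (univ.filter fun i => x' i ≠ 0).card ≤ k := by
        have h1 := Finset.card_le_card hsupp'
        have h2 : istar ∈ univ.filter fun i => x i ≠ 0 := by simp [hxstar]
        rw [Finset.card_erase_of_mem h2] at h1
        have h3 := Finset.card_pos.2 ⟨istar, h2⟩
        omega
      have hsumeq : ∑ i, x' i • a i = ∑ i, x i • a i := by
        simp only [hx', sub_smul, Finset.sum_sub_distrib, mul_smul, ← Finset.smul_sum, hdsum,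
          smul_zero, sub_zero]
      obtain ⟨x'', h0, h1, h2⟩ := ih x' hx'0 hcard'
      exact ⟨x'', h0, h1.trans hsumeq, h2⟩

lemma cone_isClosed {ι : Type*} [Fintype ι] [DecidableEq ι] (a : ι → E) :
    IsClosed {y : E | ∃ x : ι → ℝ, (∀ i, 0 ≤ x i) ∧ ∑ i, x i • a i = y} := by
  have hsum_subtype : ∀ (S : Finset ι) (x : ι → ℝ), (∀ i, x i ≠ 0 → i ∈ S) →
      ∑ i : ↥S, x i.1 • a i.1 = ∑ i, x i • a i := by
    intro S x hxs
    rw [← Finset.sum_subtype S (fun i => Iff.rfl) (fun i => x i • a i)]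
    refine Finset.sum_subset (Finset.subset_univ _) ?_
    intro i _ hni
    have : x i = 0 := by by_contra h; exact hni (hxs i h)
    simp [this]
  have key : ∀ S : Finset ι, IsClosed {y : E | LinearIndependent ℝ (fun i : ↥S => a i.1) ∧
      ∃ x : ι → ℝ, (∀ i, 0 ≤ x i) ∧ (∀ i, x i ≠ 0 → i ∈ S) ∧ ∑ i, x i • a i = y} := by
    intro S
    by_cases hli : LinearIndependent ℝ (fun i : ↥S => a i.1)
    · let f : (↥S → ℝ) →ₗ[ℝ] E :=
        { toFun := fun z => ∑ i : ↥S, z i • a i.1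
          map_add' := fun z w => by simp [add_smul, Finset.sum_add_distrib]
          map_smul' := fun c z => by simp [mul_smul, Finset.smul_sum] }
      have hker : LinearMap.ker f = ⊥ := by
        rw [LinearMap.ker_eq_bot']
        intro z hz
        exact funext (Fintype.linearIndependent_iff.1 hli z hz)
      have hfc : IsClosedEmbedding f := LinearMap.isClosedEmbedding_of_injective hker
      have horth : IsClosed {z : ↥S → ℝ | ∀ i, 0 ≤ z i} := by
        have h : {z : ↥S → ℝ | ∀ i, 0 ≤ z i} = ⋂ i, {z | 0 ≤ z i} := by ext; simp [Set.mem_iInter]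
        rw [h]
        exact isClosed_iInter fun i => isClosed_le continuous_const (continuous_apply i)
      have himg : f '' {z : ↥S → ℝ | ∀ i, 0 ≤ z i}
          = {y : E | LinearIndependent ℝ (fun i : ↥S => a i.1) ∧
            ∃ x : ι → ℝ, (∀ i, 0 ≤ x i) ∧ (∀ i, x i ≠ 0 → i ∈ S) ∧ ∑ i, x i • a i = y} := by
        ext y
        simp only [Set.mem_image, Set.mem_setOf_eq]
        constructor
        · rintro ⟨z, hz, rfl⟩
          refine ⟨hli, fun i => if h : i ∈ S then z ⟨i, h⟩ else 0, ?_, ?_, ?_⟩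
          · intro i
            by_cases h : i ∈ S
            · simpa [h] using hz ⟨i, h⟩
            · simp [h]
          · intro i hi
            by_cases h : i ∈ S
            · exact h
            · simp [h] at hi
          · rw [← hsum_subtype S _ (fun i hi => by by_contra h; simp [h] at hi)]
            exact (Finset.sum_congr rfl fun i _ => by simp [i.2]).symm
        · rintro ⟨-, x, hx0, hxs, rfl⟩
          exact ⟨fun i => x i.1, fun i => hx0 i.1, hsum_subtype S x hxs⟩
      rw [← himg]
      exact hfc.isClosedMap _ horth
    · have h : {y : E | LinearIndependent ℝ (fun i : ↥S => a i.1) ∧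
          ∃ x : ι → ℝ, (∀ i, 0 ≤ x i) ∧ (∀ i, x i ≠ 0 → i ∈ S) ∧ ∑ i, x i • a i = y} = ∅ := by
        ext y; simp [hli]
      rw [h]; exact isClosed_empty
  have hunion : {y : E | ∃ x : ι → ℝ, (∀ i, 0 ≤ x i) ∧ ∑ i, x i • a i = y}
      = ⋃ S : Finset ι, {y : E | LinearIndependent ℝ (fun i : ↥S => a i.1) ∧
          ∃ x : ι → ℝ, (∀ i, 0 ≤ x i) ∧ (∀ i, x i ≠ 0 → i ∈ S) ∧ ∑ i, x i • a i = y} := by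
    ext y
    simp only [Set.mem_iUnion, Set.mem_setOf_eq]
    constructor
    · rintro ⟨x, hx0, rfl⟩
      obtain ⟨x', h0, hsum, hli⟩ :=
        cone_caratheodory a (univ.filter fun i => x i ≠ 0).card x hx0 le_rfl
      refine ⟨univ.filter fun i => x' i ≠ 0, ?_, x', h0, fun i hi => by simp [hi], hsum⟩
      exact
        hli.comp ((Equiv.subtypeEquivRight (fun i => by simp) :
          (↥(univ.filter fun i => x' i ≠ 0)) ≃ {i // x' i ≠ 0}))
          (Equiv.injective _)
    · rintro ⟨S, -, x, hx0, -, rfl⟩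
      exact ⟨x, hx0, rfl⟩
  rw [hunion]
  exact isClosed_iUnion_of_finite key

open scoped RealInnerProductSpace in
lemma farkas_cone [FiniteDimensional ℝ E] {ι : Type*} [Fintype ι] [DecidableEq ι]
    (a : ι → E) (b : E)
    (h : ¬ ∃ x : ι → ℝ, (∀ i, 0 ≤ x i) ∧ ∑ i, x i • a i = b) :
    ∃ y : E, (∀ i, 0 ≤ ⟪a i, y⟫) ∧ ⟪y, b⟫ < 0 := by
  let K : ConvexCone ℝ E :=
    { carrier := {y : E | ∃ x : ι → ℝ, (∀ i, 0 ≤ x i) ∧ ∑ i, x i • a i = y}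
      smul_mem' := by
        rintro c hc y ⟨x, hx0, rfl⟩
        exact ⟨fun i => c * x i, fun i => mul_nonneg hc.le (hx0 i), by
          simp [mul_smul, ← Finset.smul_sum]⟩
      add_mem' := by
        rintro y ⟨x, hx0, rfl⟩ y' ⟨x', hx'0, rfl⟩
        exact ⟨x + x', fun i => add_nonneg (hx0 i) (hx'0 i), by
          simp [add_smul, Finset.sum_add_distrib]⟩ }
  have hne : (K : Set E).Nonempty := ⟨0, 0, fun i => le_refl 0, by simp⟩
  have hcl : IsClosed (K : Set E) := cone_isClosed a
  have hb : b ∉ K := fun hb => h hb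
  let C : ProperCone ℝ E :=
    { carrier := (K : Set E)
      add_mem' := fun ha hb => K.add_mem ha hb
      zero_mem' := ⟨0, fun _ => le_refl 0, by simp⟩
      smul_mem' := by
        rintro c y ⟨x, hx0, rfl⟩
        exact ⟨fun i => (c : ℝ) * x i, fun i => mul_nonneg c.2 (hx0 i), by
          simp [NNReal.smul_def, mul_smul, ← Finset.smul_sum]⟩
      isClosed' := hcl }
  obtain ⟨y, hy1, hy2⟩ := C.hyperplane_separation' (x₀ := b) hb
  refine ⟨y, fun i => hy1 (a i) ⟨fun j => if j = i then 1 else 0,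
    fun j => by dsimp only; split <;> norm_num, by simp [ite_smul]⟩, by rw [real_inner_comm]; exact hy2⟩

open scoped RealInnerProductSpace in
lemma farkas_ineq {ι κ : Type*} [Fintype ι] [Fintype κ] [DecidableEq ι] [DecidableEq κ]
    (G : κ → ι → ℝ) (r : κ → ℝ)
    (h : ¬ ∃ x : ι → ℝ, ∀ k, r k ≤ ∑ j, G k j * x j) :
    ∃ y : κ → ℝ, (∀ k, 0 ≤ y k) ∧ (∀ j, ∑ k, y k * G k j = 0) ∧ 0 < ∑ k, y k * r k := by
  classical
  let ee : (κ → ℝ) → EuclideanSpace ℝ κ := (WithLp.equiv 2 (κ → ℝ)).symm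
  let L : EuclideanSpace ℝ κ ≃ₗ[ℝ] (κ → ℝ) := WithLp.linearEquiv 2 ℝ (κ → ℝ)
  let a : (ι ⊕ ι ⊕ κ) → EuclideanSpace ℝ κ := fun s =>
    Sum.elim (fun j => ee fun k => G k j)
      (Sum.elim (fun j => ee fun k => -G k j)
        (fun k0 => ee fun k => if k = k0 then (-1:ℝ) else 0)) s
  have hLa : ∀ s, L (a s) = Sum.elim (fun j => fun k => G k j)
      (Sum.elim (fun j => fun k => -G k j)
        (fun k0 => fun k => if k = k0 then (-1:ℝ) else 0)) s := by
    rintro (j | j | k0) <;> rfl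
  have hnot : ¬ ∃ x : (ι ⊕ ι ⊕ κ) → ℝ, (∀ s, 0 ≤ x s) ∧ ∑ s, x s • a s = ee r := by
    rintro ⟨x, hx0, hsum⟩
    apply h
    refine ⟨fun j => x (.inl j) - x (.inr (.inl j)), fun k => ?_⟩
    have h2 : ∑ s, x s • (L (a s)) = r := by
      have h3 := congrArg L hsum
      rw [map_sum] at h3
      simp only [map_smul] at h3
      rw [h3]
      rfl
    have h4 := congrFun h2 k
    simp only [Finset.sum_apply, Pi.smul_apply, smul_eq_mul, hLa] at h4
    rw [Fintype.sum_sum_type, Fintype.sum_sum_type] at h4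
    simp only [Sum.elim_inl, Sum.elim_inr, mul_ite, mul_neg, mul_one, mul_zero] at h4
    rw [Finset.sum_ite_eq Finset.univ k (fun k0 => -x (Sum.inr (Sum.inr k0)))] at h4
    simp only [Finset.mem_univ, if_true] at h4
    have h5 : 0 ≤ x (Sum.inr (Sum.inr k)) := hx0 _
    have h6 : ∑ j, G k j * (x (Sum.inl j) - x (Sum.inr (Sum.inl j)))
        = ∑ j, x (Sum.inl j) * G k j + ∑ j, x (Sum.inr (Sum.inl j)) * -G k j := by
      rw [← Finset.sum_add_distrib]
      exact Finset.sum_congr rfl fun j _ => by ring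
    rw [h6]
    simp only [mul_neg]
    linarith
  obtain ⟨y', hy'1, hy'2⟩ := farkas_cone a (ee r) hnot
  refine ⟨fun k => -(WithLp.equiv 2 (κ → ℝ) y' k), ?_, ?_, ?_⟩
  · intro k
    have := hy'1 (.inr (.inr k))
    simp only [a, Sum.elim_inr, PiLp.inner_apply, RCLike.inner_apply, conj_trivial] at this
    simp only [ee, WithLp.equiv_symm_apply, WithLp.ofLp_toLp, mul_ite, mul_neg, mul_one, mul_zero] at this
    rw [Finset.sum_ite_eq' Finset.univ k (fun k' => -(y' k'))] at this
    simp only [Finset.mem_univ, if_true] at this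
    simpa using this
  · intro j
    have h1 := hy'1 (.inl j)
    have h2 := hy'1 (.inr (.inl j))
    simp only [a, Sum.elim_inl, Sum.elim_inr, PiLp.inner_apply, RCLike.inner_apply,
      conj_trivial, ee, WithLp.equiv_symm_apply, WithLp.ofLp_toLp, mul_neg] at h1 h2
    have hc : ∑ x, y' x * G x j = ∑ k, G k j * y' k := Finset.sum_congr rfl fun k _ => mul_comm _ _
    have h2' : ∑ k, G k j * y' k ≤ 0 := by
      rw [Finset.sum_neg_distrib] at h2; linarith
    have h1' : 0 ≤ ∑ k, G k j * y' k := by linarith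
    have : ∑ k, G k j * y' k = 0 := le_antisymm h2' h1'
    rw [← neg_eq_zero, ← Finset.sum_neg_distrib] at this
    rw [← this]
    exact Finset.sum_congr rfl fun k _ => by
      simp only [WithLp.equiv_apply]; ring
  · simp only [PiLp.inner_apply, RCLike.inner_apply, conj_trivial, ee,
      WithLp.equiv_symm_apply, WithLp.ofLp_toLp] at hy'2
    have hc2 : ∑ k, r k * y' k = ∑ k, y' k * r k := Finset.sum_congr rfl fun k _ => mul_comm _ _
    have : ∑ k, -(y' k) * r k = -∑ k, y' k * r k := by
      rw [← Finset.sum_neg_distrib]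
      exact Finset.sum_congr rfl fun k _ => by ring
    have h7 : 0 < -∑ k, y' k * r k := by linarith
    calc (0:ℝ) < -∑ k, y' k * r k := h7
      _ = ∑ k, -(WithLp.equiv 2 (κ → ℝ) y' k) * r k := by
          rw [← Finset.sum_neg_distrib]
          exact Finset.sum_congr rfl fun k _ => by simp [WithLp.equiv_apply]

lemma swap_sum {m n : ℕ} (A : Matrix (Fin m) (Fin n) ℝ) (l : Fin m → ℝ) (u : Fin n → ℝ) :
    ∑ i, l i * A.mulVec u i = ∑ j, A.transpose.mulVec l j * u j := by
  simp only [Matrix.mulVec, dotProduct, Matrix.transpose_apply, Finset.mul_sum,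
    Finset.sum_mul]
  rw [Finset.sum_comm]
  exact Finset.sum_congr rfl fun j _ => Finset.sum_congr rfl fun i _ => by ring

/-- Dual representation of the ℓ1-distance to a nonempty polyhedron
`P = {v : A v ≤ c}`: for every `w`,
`inf_{v ∈ P} ‖w - v‖₁ = sup {⟨λ, A w - c⟩ : λ ≥ 0, ‖Aᵀ λ‖_∞ ≤ 1}`. -/
theorem l1_dist_to_polyhedron_dual (m n : ℕ)
    (A : Matrix (Fin m) (Fin n) ℝ) (c : Fin m → ℝ)
    (hP : ({v : Fin n → ℝ | ∀ i, A.mulVec v i ≤ c i}).Nonempty)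
    (w : Fin n → ℝ) :
    sInf ((fun v : Fin n → ℝ => ∑ j, |w j - v j|) ''
        {v : Fin n → ℝ | ∀ i, A.mulVec v i ≤ c i})
      = sSup {s : ℝ | ∃ l : Fin m → ℝ, (∀ i, 0 ≤ l i) ∧
          (∀ j, |A.transpose.mulVec l j| ≤ 1) ∧
          s = ∑ i, l i * (A.mulVec w i - c i)} := by
  classical
  obtain ⟨v0, hv0⟩ := hP
  set S1 := ((fun v : Fin n → ℝ => ∑ j, |w j - v j|) ''
      {v : Fin n → ℝ | ∀ i, A.mulVec v i ≤ c i}) with hS1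
  set S2 := {s : ℝ | ∃ l : Fin m → ℝ, (∀ i, 0 ≤ l i) ∧
      (∀ j, |A.transpose.mulVec l j| ≤ 1) ∧
      s = ∑ i, l i * (A.mulVec w i - c i)} with hS2
  have weak : ∀ (l : Fin m → ℝ), (∀ i, 0 ≤ l i) → (∀ j, |A.transpose.mulVec l j| ≤ 1) →
      ∀ v, (∀ i, A.mulVec v i ≤ c i) →
      ∑ i, l i * (A.mulVec w i - c i) ≤ ∑ j, |w j - v j| := by
    intro l hl hl1 v hv
    calc ∑ i, l i * (A.mulVec w i - c i)
        ≤ ∑ i, l i * (A.mulVec w i - A.mulVec v i) :=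
          Finset.sum_le_sum fun i _ => mul_le_mul_of_nonneg_left (by linarith [hv i]) (hl i)
      _ = ∑ i, l i * A.mulVec (w - v) i := by
          refine Finset.sum_congr rfl fun i _ => ?_
          rw [Matrix.mulVec_sub, Pi.sub_apply]
      _ = ∑ j, A.transpose.mulVec l j * (w - v) j := swap_sum A l (w - v)
      _ ≤ ∑ j, |w j - v j| := by
          refine Finset.sum_le_sum fun j _ => ?_
          calc A.transpose.mulVec l j * (w - v) j
              ≤ |A.transpose.mulVec l j * (w - v) j| := le_abs_self _
            _ = |A.transpose.mulVec l j| * |(w - v) j| := abs_mul _ _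
            _ ≤ 1 * |w j - v j| := by
                rw [Pi.sub_apply]
                exact mul_le_mul_of_nonneg_right (hl1 j) (abs_nonneg _)
            _ = |w j - v j| := one_mul _
  have h0S2 : (0:ℝ) ∈ S2 := by
    refine ⟨0, fun i => le_rfl, fun j => by simp [Matrix.mulVec_zero], by simp⟩
  have hS1ne : S1.Nonempty := ⟨_, Set.mem_image_of_mem _ hv0⟩
  have hS2bdd : BddAbove S2 := by
    refine ⟨∑ j, |w j - v0 j|, ?_⟩
    rintro s ⟨l, hl0, hl1, rfl⟩
    exact weak l hl0 hl1 v0 hv0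
  have hS1bdd : BddBelow S1 := by
    refine ⟨0, ?_⟩
    rintro t ⟨v, hv, rfl⟩
    exact Finset.sum_nonneg fun j _ => abs_nonneg _
  have dir1 : sSup S2 ≤ sInf S1 := by
    refine le_csInf hS1ne ?_
    rintro t ⟨v, hv, rfl⟩
    refine csSup_le ⟨0, h0S2⟩ ?_
    rintro s ⟨l, hl0, hl1, rfl⟩
    exact weak l hl0 hl1 v hv
  refine le_antisymm ?_ dir1
  refine le_of_forall_lt fun d' hd' => ?_
  -- set up the LP constraint system
  set G : (Fin m ⊕ (Fin n ⊕ (Fin n ⊕ Unit))) → (Fin n ⊕ Fin n) → ℝ :=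
    Sum.elim (fun i => Sum.elim (fun j => -A i j) (fun _ => 0))
      (Sum.elim
        (fun j0 => Sum.elim (fun j => if j = j0 then 1 else 0)
          (fun j => if j = j0 then 1 else 0))
        (Sum.elim
          (fun j0 => Sum.elim (fun j => if j = j0 then -1 else 0)
            (fun j => if j = j0 then 1 else 0))
          (fun _ => Sum.elim (fun _ => 0) (fun _ => -1)))) with hG
  set r : (Fin m ⊕ (Fin n ⊕ (Fin n ⊕ Unit))) → ℝ :=
    Sum.elim (fun i => -c i) (Sum.elim w (Sum.elim (fun j0 => -w j0) (fun _ => -d'))) with hr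
  have hinf : ¬ ∃ x : (Fin n ⊕ Fin n) → ℝ, ∀ k, r k ≤ ∑ j, G k j * x j := by
    rintro ⟨x, hx⟩
    set v : Fin n → ℝ := fun j => x (.inl j) with hv
    set t : Fin n → ℝ := fun j => x (.inr j) with htt
    have hvP : ∀ i, A.mulVec v i ≤ c i := by
      intro i
      have h1 := hx (.inl i)
      rw [Fintype.sum_sum_type] at h1
      simp only [hG, hr, Sum.elim_inl, Sum.elim_inr, neg_mul, zero_mul, Finset.sum_const_zero,
        add_zero] at h1
      rw [Finset.sum_neg_distrib] at h1
      have : A.mulVec v i = ∑ j, A i j * x (Sum.inl j) := by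
        simp [Matrix.mulVec, dotProduct, hv]
      linarith
    have habs : ∀ j0, |w j0 - v j0| ≤ t j0 := by
      intro j0
      have h1 := hx (.inr (.inl j0))
      have h2 := hx (.inr (.inr (.inl j0)))
      rw [Fintype.sum_sum_type] at h1 h2
      simp only [hG, hr, Sum.elim_inl, Sum.elim_inr, ite_mul, one_mul, zero_mul, neg_one_mul,
        neg_mul, Finset.sum_ite_eq, Finset.sum_ite_eq', Finset.mem_univ, if_true] at h1 h2
      rw [abs_sub_le_iff]
      constructor <;> [skip; skip] <;> simp only [hv, htt] <;> linarith
    have hsumt : ∑ j, t j ≤ d' := by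
      have h1 := hx (.inr (.inr (.inr ())))
      rw [Fintype.sum_sum_type] at h1
      simp only [hG, hr, Sum.elim_inl, Sum.elim_inr, zero_mul, neg_one_mul,
        Finset.sum_const_zero, zero_add] at h1
      rw [Finset.sum_neg_distrib] at h1
      simp only [htt]
      linarith
    have hle1 : sInf S1 ≤ ∑ j, |w j - v j| := csInf_le hS1bdd ⟨v, hvP, rfl⟩
    have hle2 : ∑ j, |w j - v j| ≤ ∑ j, t j := Finset.sum_le_sum fun j _ => habs j
    linarith
  obtain ⟨y, hy0, hycol, hyval⟩ := farkas_ineq G r hinf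
  set lam : Fin m → ℝ := fun i => y (.inl i) with hlam
  set mu : Fin n → ℝ := fun j => y (.inr (.inl j)) with hmu
  set nu : Fin n → ℝ := fun j => y (.inr (.inr (.inl j))) with hnu
  set y0 : ℝ := y (.inr (.inr (.inr ()))) with hy0def
  have hrow1 : ∀ j, ∑ i, A i j * lam i = mu j - nu j := by
    intro j
    have h1 := hycol (.inl j)
    rw [Fintype.sum_sum_type, Fintype.sum_sum_type, Fintype.sum_sum_type] at h1
    simp only [hG, Sum.elim_inl, Sum.elim_inr, mul_ite, mul_one, mul_zero, mul_neg,
      Finset.sum_ite_eq, Finset.sum_ite_eq', Finset.mem_univ, if_true, Finset.univ_unique,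
      Finset.sum_const, Finset.card_singleton, one_smul, smul_eq_mul, add_zero] at h1
    rw [Finset.sum_neg_distrib] at h1
    have h2 : ∑ i, A i j * lam i = ∑ i, y (Sum.inl i) * A i j :=
      Finset.sum_congr rfl fun i _ => by rw [hlam]; ring
    rw [h2]
    simp only [hmu, hnu]
    linarith
  have hrow2 : ∀ j, mu j + nu j = y0 := by
    intro j
    have h1 := hycol (.inr j)
    rw [Fintype.sum_sum_type, Fintype.sum_sum_type, Fintype.sum_sum_type] at h1
    simp only [hG, Sum.elim_inl, Sum.elim_inr, mul_ite, mul_one, mul_zero, mul_neg,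
      Finset.sum_ite_eq, Finset.sum_ite_eq', Finset.mem_univ, if_true, Finset.univ_unique,
      Finset.sum_singleton, Finset.sum_const_zero, add_zero, zero_add] at h1
    simp only [hmu, hnu, hy0def]
    linarith
  have hAtlam : ∀ j, A.transpose.mulVec lam j = ∑ i, A i j * lam i := by
    intro j
    simp [Matrix.mulVec, dotProduct, Matrix.transpose_apply]
  rw [Fintype.sum_sum_type, Fintype.sum_sum_type, Fintype.sum_sum_type] at hyval
  simp only [hr, Sum.elim_inl, Sum.elim_inr, mul_neg, Finset.univ_unique,
    Finset.sum_singleton] at hyval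
  rw [Finset.sum_neg_distrib, Finset.sum_neg_distrib] at hyval
  by_cases hy0z : y0 = 0
  · exfalso
    have hmunu : ∀ j, mu j = 0 ∧ nu j = 0 := by
      intro j
      have h1 := hrow2 j
      have h2 : 0 ≤ mu j := hy0 _
      have h3 : 0 ≤ nu j := hy0 _
      rw [hy0z] at h1
      constructor <;> linarith
    have hAt : ∀ j, ∑ i, A i j * lam i = 0 := fun j => by
      rw [hrow1 j, (hmunu j).1, (hmunu j).2, sub_zero]
    have hsw : ∑ i, lam i * A.mulVec v0 i = 0 := by
      rw [swap_sum A lam v0]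
      refine Finset.sum_eq_zero fun j _ => ?_
      rw [hAtlam j, hAt j, zero_mul]
    have e1 : ∑ j, y (Sum.inr (Sum.inl j)) * w j = 0 :=
      Finset.sum_eq_zero fun j _ => by
        rw [show y (Sum.inr (Sum.inl j)) = mu j from rfl, (hmunu j).1, zero_mul]
    have e2 : ∑ j, y (Sum.inr (Sum.inr (Sum.inl j))) * w j = 0 :=
      Finset.sum_eq_zero fun j _ => by
        rw [show y (Sum.inr (Sum.inr (Sum.inl j))) = nu j from rfl, (hmunu j).2, zero_mul]
    have e3 : ∑ i, y (Sum.inl i) * c i = ∑ i, lam i * c i :=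
      Finset.sum_congr rfl fun i _ => by rw [hlam]
    rw [e1, e2, e3] at hyval
    have hlc : ∑ i, lam i * c i < 0 := by
      have hy0u : y (Sum.inr (Sum.inr (Sum.inr ()))) = y0 := rfl
      rw [show (Sum.inr (Sum.inr (Sum.inr PUnit.unit)) : Fin m ⊕ Fin n ⊕ Fin n ⊕ Unit)
        = Sum.inr (Sum.inr (Sum.inr ())) from rfl] at hyval
      rw [hy0u, hy0z] at hyval
      linarith
    have hle : ∑ i, lam i * A.mulVec v0 i ≤ ∑ i, lam i * c i :=
      Finset.sum_le_sum fun i _ => mul_le_mul_of_nonneg_left (hv0 i) (hy0 _)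
    rw [hsw] at hle
    linarith
  · have hy0pos : 0 < y0 := lt_of_le_of_ne (hy0 _) (Ne.symm hy0z)
    set l : Fin m → ℝ := fun i => lam i / y0 with hl
    have hl0 : ∀ i, 0 ≤ l i := fun i => div_nonneg (hy0 _) hy0pos.le
    have hAtl : ∀ j, A.transpose.mulVec l j = (mu j - nu j) / y0 := by
      intro j
      have h1 : A.transpose.mulVec l j = ∑ i, A i j * l i := by
        simp [Matrix.mulVec, dotProduct, Matrix.transpose_apply]
      rw [h1, show ∑ i, A i j * l i = (∑ i, A i j * lam i) / y0 from by
        rw [Finset.sum_div]; exact Finset.sum_congr rfl fun i _ => by rw [hl]; ring]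
      rw [hrow1 j]
    have hl1 : ∀ j, |A.transpose.mulVec l j| ≤ 1 := by
      intro j
      rw [hAtl j, abs_div, abs_of_pos hy0pos, div_le_one hy0pos]
      have h2 := hrow2 j
      have h3 : 0 ≤ mu j := hy0 _
      have h4 : 0 ≤ nu j := hy0 _
      exact abs_le.2 ⟨by linarith, by linarith⟩
    have hsw2 : ∑ i, lam i * A.mulVec w i = ∑ j, (mu j - nu j) * w j := by
      rw [swap_sum A lam w]
      exact Finset.sum_congr rfl fun j _ => by rw [hAtlam j, hrow1 j]
    have hsplitmn : ∑ j, (mu j - nu j) * w j = ∑ j, mu j * w j - ∑ j, nu j * w j := by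
      rw [← Finset.sum_sub_distrib]
      exact Finset.sum_congr rfl fun j _ => by ring
    have hkey : y0 * d' < ∑ i, lam i * (A.mulVec w i - c i) := by
      have hsplit : ∑ i, lam i * (A.mulVec w i - c i)
          = ∑ i, lam i * A.mulVec w i - ∑ i, lam i * c i := by
        rw [← Finset.sum_sub_distrib]
        exact Finset.sum_congr rfl fun i _ => by ring
      have e3 : ∑ i, y (Sum.inl i) * c i = ∑ i, lam i * c i :=
        Finset.sum_congr rfl fun i _ => by rw [hlam]
      have e4 : ∑ j, y (Sum.inr (Sum.inl j)) * w j = ∑ j, mu j * w j :=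
        Finset.sum_congr rfl fun j _ => by rw [hmu]
      have e5 : ∑ j, y (Sum.inr (Sum.inr (Sum.inl j))) * w j = ∑ j, nu j * w j :=
        Finset.sum_congr rfl fun j _ => by rw [hnu]
      have hy0u : y (Sum.inr (Sum.inr (Sum.inr PUnit.unit))) = y0 := rfl
      rw [e3, e4, e5, hy0u] at hyval
      rw [hsplit, hsw2, hsplitmn]
      linarith
    have hveq : ∑ i, l i * (A.mulVec w i - c i)
        = (∑ i, lam i * (A.mulVec w i - c i)) / y0 := by
      rw [Finset.sum_div]
      exact Finset.sum_congr rfl fun i _ => by rw [hl]; ring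
    have hgt : d' < ∑ i, l i * (A.mulVec w i - c i) := by
      rw [hveq, lt_div_iff₀ hy0pos]
      linarith
    exact lt_of_lt_of_le hgt (le_csSup hS2bdd ⟨l, hl0, hl1, rfl⟩)
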